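/- Let u be positively homogeneous of degree α ∈ (0,1), C² and positive on an open cone Ω ⊂ ℝⁿ \ {0}, and set v := u^{1/α}, which is 1-homogeneous. Then at each ω ∈ Ω ∩ S^{n-1}, σ_{n-1}(D²v) = f^{(n-1)/α − n} / (αⁿ(α−1)) · det D²u, where u = r^α f(ω). -/

import Mathlib

set_option maxHeartbeats 1000000

open Matrix

section AuxLinearAlgebra

variable {n : ℕ}

private lemma aux_mul_vecMulVec (A : Matrix (Fin n) (Fin n) ℝ) (x y : Fin n → ℝ) :
    A * vecMulVec x y = vecMulVec (A *ᵥ x) y := by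
  ext i j
  simp only [Matrix.mul_apply, vecMulVec_apply, mulVec, dotProduct, Finset.sum_mul]
  congr 1; ext k; ring

private lemma aux_vecMulVec_mul (x y : Fin n → ℝ) (B : Matrix (Fin n) (Fin n) ℝ) :
    vecMulVec x y * B = vecMulVec x (y ᵥ* B) := by
  ext i j
  simp only [Matrix.mul_apply, vecMulVec_apply, vecMul, dotProduct, Finset.mul_sum]
  congr 1; ext k; ring

private lemma aux_vecMulVec_mulVec (x y z : Fin n → ℝ) :
    vecMulVec x y *ᵥ z = (y ⬝ᵥ z) • x := by
  funext i
  simp only [mulVec, dotProduct, vecMulVec_apply, Pi.smul_apply, smul_eq_mul,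
    Finset.sum_mul, Finset.mul_sum]
  exact Finset.sum_congr rfl fun k _ => by ring

private lemma aux_vecMulVec_mul_vecMulVec (q r s t : Fin n → ℝ) :
    vecMulVec q r * vecMulVec s t = (r ⬝ᵥ s) • vecMulVec q t := by
  rw [aux_vecMulVec_mul]
  ext i j
  simp only [vecMulVec_apply, vecMul, dotProduct, Pi.smul_apply, smul_eq_mul,
    Matrix.smul_apply, Finset.mul_sum, Finset.sum_mul]
  congr 1; ext k; ring

private lemma exists_householder (w : Fin n → ℝ) (j₀ : Fin n) (hw : w ⬝ᵥ w = 1) :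
    ∃ Q : Matrix (Fin n) (Fin n) ℝ, Qᵀ = Q ∧ Q * Q = 1 ∧ Q *ᵥ Pi.single j₀ 1 = w := by
  set e : Fin n → ℝ := Pi.single j₀ 1 with he
  set q : Fin n → ℝ := w - e with hq
  have hee : e ⬝ᵥ e = 1 := by simp [he, dotProduct_single]
  have hwe : w ⬝ᵥ e = w j₀ := by simp [he, dotProduct_single]
  have hew : e ⬝ᵥ w = w j₀ := by simp [he, single_dotProduct]
  have hqe : q ⬝ᵥ e = w j₀ - 1 := by
    rw [hq, sub_dotProduct, hwe, hee]
  have hqq : q ⬝ᵥ q = 2 - 2 * w j₀ := by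
    rw [hq, sub_dotProduct, dotProduct_sub, dotProduct_sub, hwe, hew, hee, hw]; ring
  by_cases hs : q ⬝ᵥ q = 0
  · have hq0 : q = 0 := by
      funext i
      have h := (Finset.sum_eq_zero_iff_of_nonneg
        (fun k _ => mul_self_nonneg (q k))).1 hs i (Finset.mem_univ i)
      exact mul_self_eq_zero.mp h
    have hwe' : w = e := by
      have := hq0; rw [hq] at this; linear_combination (norm := abel) this
    exact ⟨1, Matrix.transpose_one, by simp, by rw [Matrix.one_mulVec, hwe']⟩
  · set s : ℝ := q ⬝ᵥ q with hsdef
    set V : Matrix (Fin n) (Fin n) ℝ := vecMulVec q q with hV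
    refine ⟨1 - (2 / s) • V, ?_, ?_, ?_⟩
    · rw [transpose_sub, transpose_smul, Matrix.transpose_one]
      congr 1
      ext i j; simp [hV, vecMulVec_apply, mul_comm]
    · have hVV : V * V = s • V := by
        rw [hV, aux_vecMulVec_mul_vecMulVec, hsdef]
      simp only [Matrix.sub_mul, Matrix.mul_sub, Matrix.one_mul, Matrix.mul_one,
        Matrix.smul_mul, Matrix.mul_smul, hVV, smul_smul, smul_sub]
      have hkey : 2 / s * (2 / s * s) = 2 / s + 2 / s := by field_simp; ring
      rw [hkey, add_smul]
      abel
    · rw [Matrix.sub_mulVec, Matrix.one_mulVec, smul_mulVec, hV,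
        aux_vecMulVec_mulVec, hqe, smul_smul]
      have hwj : w j₀ - 1 ≠ 0 := by
        intro h
        apply hs
        rw [hqq]
        linarith [sub_eq_zero.mp h]
      have hks : 2 / s * (w j₀ - 1) = -1 := by
        have hss : s = -2 * (w j₀ - 1) := by rw [hqq]; ring
        rw [hss]
        field_simp
      rw [hks]
      funext i; simp [hq]

/-- If `M` is a symmetric real matrix killing a unit vector `w`, then for any rank-one
perturbation the determinant is `(w ⬝ᵥ x) * (w ⬝ᵥ y) * σ_{n-1}(M)`. -/
private lemma key_det (M : Matrix (Fin n) (Fin n) ℝ) (hM : Mᵀ = M) (w : Fin n → ℝ)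
    (hw : w ⬝ᵥ w = 1) (hker : M *ᵥ w = 0) (x y : Fin n → ℝ) :
    (M + vecMulVec x y).det = (w ⬝ᵥ x) * (w ⬝ᵥ y) * (adjugate M).trace := by
  have hne : Nonempty (Fin n) := by
    by_contra h
    rw [not_nonempty_iff] at h
    rw [dotProduct, Finset.univ_eq_empty, Finset.sum_empty] at hw
    exact one_ne_zero hw.symm
  obtain ⟨j₀⟩ := hne
  obtain ⟨Q, hQsym, hQQ, hQe⟩ := exists_householder w j₀ hw
  set N : Matrix (Fin n) (Fin n) ℝ := Q * M * Q with hN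
  have hNcol : ∀ i, N i j₀ = 0 := by
    intro i
    have h : N *ᵥ Pi.single j₀ 1 = 0 := by
      rw [hN, ← Matrix.mulVec_mulVec, ← Matrix.mulVec_mulVec, hQe, hker, Matrix.mulVec_zero]
    have := congrFun h i
    simpa [Matrix.mulVec_single] using this
  have hNsym : Nᵀ = N := by
    rw [hN, Matrix.transpose_mul, Matrix.transpose_mul, hQsym, hM, Matrix.mul_assoc]
  have hNrow : ∀ j, N j₀ j = 0 := by
    intro j
    have := congrFun (congrFun hNsym j) j₀
    rw [Matrix.transpose_apply] at this
    exact this.trans (hNcol j)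
  have hadj1 : ∀ i j, j ≠ j₀ → adjugate N i j = 0 := by
    intro i j hj
    rw [adjugate_apply]
    apply det_eq_zero_of_row_eq_zero j₀
    intro k
    rw [Matrix.updateRow_ne (Ne.symm hj)]
    exact hNrow k
  have hadj2 : ∀ i, i ≠ j₀ → adjugate N i j₀ = 0 := by
    intro i hi
    rw [adjugate_apply]
    apply det_eq_zero_of_column_eq_zero j₀
    intro k
    rcases eq_or_ne k j₀ with rfl | hk
    · rw [Matrix.updateRow_self]
      exact Pi.single_eq_of_ne (Ne.symm hi) 1
    · rw [Matrix.updateRow_ne hk]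
      exact hNcol k
  have hMback : Q * N * Q = M := by
    rw [hN]
    calc Q * (Q * M * Q) * Q = (Q * Q) * M * (Q * Q) := by
          simp only [Matrix.mul_assoc]
      _ = M := by rw [hQQ, Matrix.one_mul, Matrix.mul_one]
  have hadjQ : adjugate Q * adjugate Q = (1 : Matrix (Fin n) (Fin n) ℝ) := by
    rw [← adjugate_mul_distrib, hQQ, adjugate_one]
  have htrace : (adjugate M).trace = adjugate N j₀ j₀ := by
    have h1 : adjugate M = adjugate Q * (adjugate N * adjugate Q) := by
      rw [← hMback, adjugate_mul_distrib, adjugate_mul_distrib]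
    rw [h1, Matrix.trace_mul_comm, Matrix.mul_assoc, hadjQ, Matrix.mul_one]
    rw [Matrix.trace]
    apply Finset.sum_eq_single j₀
    · intro i _ hi
      exact hadj1 i i hi
    · intro h; exact absurd (Finset.mem_univ j₀) h
  have hQdet : Q.det * Q.det = 1 := by rw [← det_mul, hQQ, det_one]
  set r : Fin n → ℝ := Q *ᵥ x with hr
  set t : Fin n → ℝ := Q *ᵥ y with ht
  have hQrowj : ∀ k, Q j₀ k = w k := by
    intro k
    have h1 : Q k j₀ = w k := by
      have := congrFun hQe k
      simpa [Matrix.mulVec_single] using this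
    have h2 := congrFun (congrFun hQsym k) j₀
    rw [Matrix.transpose_apply] at h2
    exact h2.trans h1
  have hrj : r j₀ = w ⬝ᵥ x := by
    rw [hr]; simp only [mulVec, dotProduct]
    exact Finset.sum_congr rfl fun k _ => by rw [hQrowj k]
  have htj : t j₀ = w ⬝ᵥ y := by
    rw [ht]; simp only [mulVec, dotProduct]
    exact Finset.sum_congr rfl fun k _ => by rw [hQrowj k]
  have hyQ : y ᵥ* Q = Q *ᵥ y := by
    rw [← Matrix.vecMul_transpose, hQsym]
  have hconj : Q * (M + vecMulVec x y) * Q = N + vecMulVec r t := by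
    rw [Matrix.mul_add, Matrix.add_mul, aux_mul_vecMulVec, aux_vecMulVec_mul, hyQ]
  have hdeteq : (M + vecMulVec x y).det = (N + vecMulVec r t).det := by
    rw [← hconj, det_mul, det_mul]
    linear_combination (-(M + vecMulVec x y).det) * hQdet
  rw [hdeteq]
  set X : Matrix (Fin n) (Fin n) ℝ := N + vecMulVec r t with hX
  have hXrow : X j₀ = r j₀ • t := by
    funext j
    simp [hX, Matrix.add_apply, vecMulVec_apply, hNrow j]
  have step1 : X.det = (X.updateRow j₀ (r j₀ • t)).det := by
    rw [← hXrow, Matrix.updateRow_eq_self]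
  have step2 : (X.updateRow j₀ (r j₀ • t)).det = r j₀ * (X.updateRow j₀ t).det := by
    rw [Matrix.det_updateRow_smul]
  have step3 : (X.updateRow j₀ t).det = (N.updateRow j₀ t).det := by
    apply det_eq_of_forall_row_eq_smul_add_const (fun i => if i = j₀ then 0 else r i) j₀
    · simp
    · intro i j
      rcases eq_or_ne i j₀ with rfl | hi
      · simp [Matrix.updateRow_self]
      · simp only [Matrix.updateRow_ne hi, Matrix.updateRow_self, if_neg hi]
        simp [hX, Matrix.add_apply, vecMulVec_apply]
  have step4 : (N.updateRow j₀ t).det = t j₀ * adjugate N j₀ j₀ := by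
    have h1 : (N.updateRow j₀ t).det = (Nᵀ.updateCol j₀ t).det := by
      rw [Matrix.updateCol_transpose, det_transpose]
    rw [h1, ← Matrix.cramer_apply, Matrix.cramer_eq_adjugate_mulVec,
      ← Matrix.adjugate_transpose]
    simp only [mulVec, dotProduct, Matrix.transpose_apply]
    rw [Finset.sum_eq_single j₀]
    · ring
    · intro k _ hk
      rw [hadj2 k hk, zero_mul]
    · intro h; exact absurd (Finset.mem_univ j₀) h
  rw [step1, step2, step3, step4, htrace, hrj, htj]
  ring

end AuxLinearAlgebra

/-- The Hessian matrix of `v` at `x`. -/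
noncomputable def hessianMatrix (n : ℕ) (v : EuclideanSpace ℝ (Fin n) → ℝ)
    (x : EuclideanSpace ℝ (Fin n)) : Matrix (Fin n) (Fin n) ℝ :=
  Matrix.of fun i j =>
    iteratedFDeriv ℝ 2 v x ![EuclideanSpace.single i 1, EuclideanSpace.single j 1]

theorem sigma_of_one_homog_power (n : ℕ) (α : ℝ) (hα : α ∈ Set.Ioo (0 : ℝ) 1)
    (Ω : Set (EuclideanSpace ℝ (Fin n))) (hΩ : IsOpen Ω)
    (hcone : ∀ x ∈ Ω, ∀ t : ℝ, 0 < t → t • x ∈ Ω) (h0 : (0 : EuclideanSpace ℝ (Fin n)) ∉ Ω)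
    (u : EuclideanSpace ℝ (Fin n) → ℝ)
    (hreg : ContDiffOn ℝ 2 u Ω) (hpos : ∀ x ∈ Ω, 0 < u x)
    (hhom : ∀ t : ℝ, 0 < t → ∀ x ∈ Ω, u (t • x) = t ^ α * u x)
    (v : EuclideanSpace ℝ (Fin n) → ℝ) (hv : ∀ x, v x = u x ^ (1 / α))
    (ω : EuclideanSpace ℝ (Fin n)) (hωΩ : ω ∈ Ω) (hω : ‖ω‖ = 1) :
    (hessianMatrix n v ω).adjugate.trace
      = (u ω) ^ (((n : ℝ) - 1) / α - n) / (α ^ n * (α - 1)) * (hessianMatrix n u ω).det := by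
  have hveq : v = fun x => u x ^ (1 / α) := funext hv
  subst hveq
  obtain ⟨hα0, hα1⟩ := hα
  have hαne : α ≠ 0 := ne_of_gt hα0
  have hα1ne : α - 1 ≠ 0 := by intro h; rw [sub_eq_zero] at h; exact (ne_of_lt hα1) h
  have hu : 0 < u ω := hpos ω hωΩ
  have hmem : Ω ∈ nhds ω := hΩ.mem_nhds hωΩ
  have hct : ∀ x ∈ Ω, ContDiffAt ℝ 2 u x := fun x hx => hreg.contDiffAt (hΩ.mem_nhds hx)
  set L : EuclideanSpace ℝ (Fin n) → (EuclideanSpace ℝ (Fin n) →L[ℝ] ℝ) := fderiv ℝ u with hL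
  have hux : ∀ x ∈ Ω, HasFDerivAt u (L x) x := fun x hx =>
    ((hct x hx).differentiableAt (by norm_num)).hasFDerivAt
  have hL1 : ContDiffAt ℝ 1 L ω := (hct ω hωΩ).fderiv_right (by norm_num)
  set H2 : EuclideanSpace ℝ (Fin n) →L[ℝ] EuclideanSpace ℝ (Fin n) →L[ℝ] ℝ :=
    fderiv ℝ L ω with hH2def
  have hH2 : HasFDerivAt L H2 ω := (hL1.differentiableAt one_ne_zero).hasFDerivAt
  have hsymm : ∀ ξ η, H2 ξ η = H2 η ξ := fun ξ η =>
    second_derivative_symmetric_of_eventually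
      (Filter.eventually_of_mem hmem (fun y hy => hux y hy)) hH2 ξ η
  have hsmul_deriv : ∀ (x : EuclideanSpace ℝ (Fin n)), HasDerivAt (fun t : ℝ => t • x) x 1 :=
    fun x => by simpa using (hasDerivAt_id (1:ℝ)).smul_const x
  -- Euler's identity (first order)
  have hαu : L ω ω = α * u ω := by
    have h1 : HasDerivAt (fun t : ℝ => u (t • ω)) (L ω ω) 1 :=
      (hux ω hωΩ).comp_hasDerivAt_of_eq 1 (hsmul_deriv ω) (one_smul ℝ ω).symm
    have hev : (fun t : ℝ => u (t • ω)) =ᶠ[nhds (1:ℝ)] fun t => t ^ α * u ω := by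
      filter_upwards [Ioi_mem_nhds (zero_lt_one)] with t ht
      exact hhom t ht ω hωΩ
    have h2 : HasDerivAt (fun t : ℝ => t ^ α * u ω) (α * u ω) 1 := by
      have := (Real.hasDerivAt_rpow_const (x := (1:ℝ)) (p := α)
        (Or.inl one_ne_zero)).mul_const (u ω)
      simpa using this
    exact h1.unique (h2.congr_of_eventuallyEq hev)
  -- homogeneity of the gradient along the ray
  have hLhom : ∀ t : ℝ, 0 < t → L (t • ω) = (t ^ α / t) • L ω := by
    intro t ht
    have htne : t ≠ 0 := ne_of_gt ht
    have hmemt : t • ω ∈ Ω := hcone ω hωΩ t ht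
    have hf1 : HasFDerivAt (fun y => u (t • y)) (t • L (t • ω)) ω := by
      have hid : HasFDerivAt (fun y : EuclideanSpace ℝ (Fin n) => t • y)
          (t • ContinuousLinearMap.id ℝ (EuclideanSpace ℝ (Fin n))) ω :=
        (hasFDerivAt_id ω).const_smul t
      have h := (hux _ hmemt).comp ω hid
      refine h.congr_fderiv ?_
      ext ξ
      simp [mul_comm]
    have hf2 : HasFDerivAt (fun y => t ^ α * u y) (t ^ α • L ω) ω := (hux ω hωΩ).const_mul (t ^ α)
    have hev : (fun y => u (t • y)) =ᶠ[nhds ω] fun y => t ^ α * u y := by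
      filter_upwards [hmem] with y hy
      exact hhom t ht y hy
    have heq : t • L (t • ω) = t ^ α • L ω :=
      (hf1.congr_of_eventuallyEq hev.symm).unique hf2
    have h3 : L (t • ω) = t⁻¹ • (t ^ α • L ω) := by
      rw [← heq, smul_smul, inv_mul_cancel₀ htne, one_smul]
    rw [h3, smul_smul, div_eq_inv_mul]
  -- Euler's identity (second order)
  have hH2ω : H2 ω = (α - 1) • L ω := by
    have h1 : HasDerivAt (fun t : ℝ => L (t • ω)) (H2 ω) 1 :=
      hH2.comp_hasDerivAt_of_eq 1 (hsmul_deriv ω) (one_smul ℝ ω).symm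
    have hev : (fun t : ℝ => L (t • ω)) =ᶠ[nhds (1:ℝ)] fun t => (t ^ α / t) • L ω := by
      filter_upwards [Ioi_mem_nhds (zero_lt_one)] with t ht
      exact hLhom t ht
    have hg : HasDerivAt (fun t : ℝ => t ^ α / t) (α - 1) 1 := by
      have h := (Real.hasDerivAt_rpow_const (x := (1:ℝ)) (p := α) (Or.inl one_ne_zero)).div
        (hasDerivAt_id 1) one_ne_zero
      exact h.congr_deriv (by simp)
    have h2 : HasDerivAt (fun t : ℝ => (t ^ α / t) • L ω) ((α - 1) • L ω) 1 :=
      hg.smul_const (L ω)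
    exact h1.unique (h2.congr_of_eventuallyEq hev)
  -- second derivative of v = u ^ β
  set β : ℝ := 1 / α with hβ
  set a : ℝ := β * u ω ^ (β - 1) with ha
  set d : ℝ := β * ((β - 1) * u ω ^ (β - 1 - 1)) with hd
  set G : EuclideanSpace ℝ (Fin n) → (EuclideanSpace ℝ (Fin n) →L[ℝ] ℝ) :=
    fun x => (β * u x ^ (β - 1)) • L x with hG
  have hvx : ∀ x ∈ Ω, HasFDerivAt (fun y => u y ^ β) (G x) x := fun x hx =>
    (hux x hx).rpow_const (p := β) (Or.inl (hpos x hx).ne')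
  have hfd : fderiv ℝ (fun y => u y ^ β) =ᶠ[nhds ω] G := by
    filter_upwards [hmem] with x hx
    exact (hvx x hx).fderiv
  have hsc : HasFDerivAt (fun x => β * u x ^ (β - 1)) (d • L ω) ω := by
    have h := ((hux ω hωΩ).rpow_const (p := β - 1) (Or.inl hu.ne')).const_mul β
    refine h.congr_fderiv ?_
    rw [hd, smul_smul]
  have hGd : HasFDerivAt G (a • H2 + (d • L ω).smulRight (L ω)) ω := hsc.smul hH2
  have hd2v : fderiv ℝ (fderiv ℝ (fun y => u y ^ β)) ω
      = a • H2 + (d • L ω).smulRight (L ω) := by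
    rw [hfd.fderiv_eq]
    exact hGd.fderiv
  -- coordinates
  set p : Fin n → ℝ := fun i => L ω (EuclideanSpace.single i 1) with hp
  set w : Fin n → ℝ := fun i => ω i with hwdef
  have hsum : ∀ ξ : EuclideanSpace ℝ (Fin n), ∑ j, ξ j • EuclideanSpace.single j (1:ℝ) = ξ := by
    intro ξ; ext k
    rw [show ((∑ j, ξ j • EuclideanSpace.single j (1:ℝ)) k)
        = ∑ j, (ξ j • EuclideanSpace.single j (1:ℝ)) k from by rw [WithLp.ofLp_sum, Finset.sum_apply]]
    simp [EuclideanSpace.single_apply]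
  have hCLM : ∀ (T : EuclideanSpace ℝ (Fin n) →L[ℝ] ℝ) (ξ : EuclideanSpace ℝ (Fin n)),
      T ξ = ∑ j, ξ j * T (EuclideanSpace.single j 1) := by
    intro T ξ
    conv_lhs => rw [← hsum ξ]
    rw [map_sum]
    simp
  have hww : w ⬝ᵥ w = 1 := by
    have h := real_inner_self_eq_norm_sq ω
    rw [hω, PiLp.inner_apply] at h
    simpa [dotProduct, PiLp.inner_apply, RCLike.inner_apply, mul_comm, hwdef, sq] using h
  have hwp : w ⬝ᵥ p = α * u ω := by
    rw [← hαu]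
    rw [hCLM (L ω) ω]
    rfl
  have hHu : ∀ i j, hessianMatrix n u ω i j
      = H2 (EuclideanSpace.single i 1) (EuclideanSpace.single j 1) := by
    intro i j
    show iteratedFDeriv ℝ 2 u ω ![_, _] = _
    rw [iteratedFDeriv_two_apply]
    simp [hH2def, hL]
  have hHusym : ∀ i j, hessianMatrix n u ω j i = hessianMatrix n u ω i j := by
    intro i j; rw [hHu, hHu]; exact hsymm _ _
  have hHuw : hessianMatrix n u ω *ᵥ w = (α - 1) • p := by
    funext i
    have h1 : (hessianMatrix n u ω *ᵥ w) i
        = ∑ j, ω j * H2 (EuclideanSpace.single i 1) (EuclideanSpace.single j 1) := by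
      simp only [Matrix.mulVec, dotProduct]
      exact Finset.sum_congr rfl fun j _ => by rw [hHu]; ring
    rw [h1, ← hCLM (H2 (EuclideanSpace.single i 1)) ω, hsymm, hH2ω]
    simp [hp]
  -- the Hessian of v in matrix form
  have hHv : hessianMatrix n (fun y => u y ^ β) ω
      = a • hessianMatrix n u ω + d • Matrix.vecMulVec p p := by
    ext i j
    have h1 : hessianMatrix n (fun y => u y ^ β) ω i j
        = (a • H2 + (d • L ω).smulRight (L ω))
            (EuclideanSpace.single i 1) (EuclideanSpace.single j 1) := by
      show iteratedFDeriv ℝ 2 (fun y => u y ^ β) ω ![_, _] = _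
      rw [iteratedFDeriv_two_apply]
      simp only [Matrix.cons_val_zero, Matrix.cons_val_one, Matrix.head_cons]
      rw [hd2v]
    rw [h1]
    simp only [ContinuousLinearMap.add_apply, ContinuousLinearMap.smul_apply,
      ContinuousLinearMap.smulRight_apply, Matrix.add_apply, Matrix.smul_apply,
      Matrix.vecMulVec_apply, smul_eq_mul]
    rw [hHu]
    simp only [hp]
    ring
  set M : Matrix (Fin n) (Fin n) ℝ := hessianMatrix n (fun y => u y ^ β) ω with hM
  have hMsym : Mᵀ = M := by
    ext i j
    rw [Matrix.transpose_apply, hHv]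
    simp only [Matrix.add_apply, Matrix.smul_apply, Matrix.vecMulVec_apply, smul_eq_mul]
    rw [hHusym]
    ring
  have hrpow1 : u ω ^ (β - 1 - 1) * u ω = u ω ^ (β - 1) := by
    rw [← Real.rpow_add_one hu.ne' (β - 1 - 1)]
    congr 1; ring
  have hcoeff0 : β * (α - 1) + β * (β - 1) * α = 0 := by
    rw [hβ]; field_simp; ring
  have hcoeff : a * (α - 1) + d * (α * u ω) = 0 := by
    have h1 : a * (α - 1) + d * (α * u ω)
        = (β * (α - 1) + β * (β - 1) * α) * u ω ^ (β - 1) := by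
      rw [ha, hd, ← hrpow1]; ring
    rw [h1, hcoeff0, zero_mul]
  have hpw : p ⬝ᵥ w = α * u ω := by rw [dotProduct_comm]; exact hwp
  have hMw : M *ᵥ w = 0 := by
    rw [hHv, Matrix.add_mulVec, Matrix.smul_mulVec, Matrix.smul_mulVec, hHuw,
      aux_vecMulVec_mulVec, hpw]
    funext i
    simp only [Pi.add_apply, Pi.smul_apply, smul_eq_mul, Pi.zero_apply]
    linear_combination (p i) * hcoeff
  -- apply the key determinant identity
  have hkey := key_det M hMsym w hww hMw ((-d) • p) p
  have hMHu : M + Matrix.vecMulVec ((-d) • p) p = a • hessianMatrix n u ω := by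
    rw [hHv]
    ext i j
    simp only [Matrix.add_apply, Matrix.smul_apply, Matrix.vecMulVec_apply,
      Pi.smul_apply, smul_eq_mul]
    ring
  rw [hMHu] at hkey
  have hdot : w ⬝ᵥ ((-d) • p) = -d * (α * u ω) := by
    rw [dotProduct_smul, hwp]
    simp
  rw [hdot, hwp, Matrix.det_smul, Fintype.card_fin] at hkey
  -- final scalar computation
  have hX : -d * (α * u ω) * (α * u ω) = (α - 1) * u ω ^ β := by
    have h2 : u ω ^ (β - 1 - 1) * (u ω * u ω) = u ω ^ β := by
      rw [← mul_assoc, hrpow1, ← Real.rpow_add_one hu.ne' (β - 1)]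
      congr 1; ring
    have hco : -(β * (β - 1)) * α * α = α - 1 := by
      rw [hβ]; field_simp; ring
    calc -d * (α * u ω) * (α * u ω)
        = (-(β * (β - 1)) * α * α) * (u ω ^ (β - 1 - 1) * (u ω * u ω)) := by rw [hd]; ring
      _ = (-(β * (β - 1)) * α * α) * u ω ^ β := by rw [h2]
      _ = (α - 1) * u ω ^ β := by rw [hco]
  have hXne : (α - 1) * u ω ^ β ≠ 0 :=
    mul_ne_zero hα1ne (Real.rpow_pos_of_pos hu β).ne'
  have hapow : a ^ n = (1 / α ^ n) * u ω ^ ((β - 1) * n) := by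
    rw [ha, mul_pow]
    congr 1
    · rw [hβ, div_pow, one_pow]
    · rw [← Real.rpow_natCast (u ω ^ (β - 1)) n, ← Real.rpow_mul hu.le]
  have hC : u ω ^ (((n : ℝ) - 1) / α - n) / (α ^ n * (α - 1)) * ((α - 1) * u ω ^ β)
      = a ^ n := by
    rw [hapow]
    have hexp : ((n : ℝ) - 1) / α - n = (β - 1) * n - β := by
      rw [hβ]; field_simp; ring
    rw [hexp, Real.rpow_sub hu]
    have hαn : (α : ℝ) ^ n ≠ 0 := pow_ne_zero n hαne
    have huβ : u ω ^ β ≠ 0 := (Real.rpow_pos_of_pos hu β).ne'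
    field_simp
  refine mul_left_cancel₀ hXne ?_
  linear_combination (-1 : ℝ) * hkey
    + (-(hessianMatrix n (fun y => u y ^ β) ω).adjugate.trace) * hX
    + (-(hessianMatrix n u ω).det) * hC
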